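/- Let G be an essential labelled graph. The sofic subshift Σ(G) is chain-transitive if and only if the linking graph G/≈ is strongly connected. -/

import Mathlib

/-! Common definitions: labelled graphs, walks, follower sets, the linking
relation, subshifts over `ℤ → A`, chains, and attractors. -/

structure LGraph (A : Type) where
  V : Type
  E : Type
  [finV : Finite V]
  [finE : Finite E]
  s : E → V
  t : E → V
  lab : E → A

attribute [instance] LGraph.finV LGraph.finE

namespace LGraph

variable {A : Type}

/-- `Walk G u v es` : the list of edges `es` forms a walk from `u` to `v`. -/
inductive Walk (G : LGraph A) : G.V → G.V → List G.E → Prop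
  | nil (v : G.V) : Walk G v v []
  | cons {w : G.V} {es : List G.E} (e : G.E) (h : Walk G (G.t e) w es) :
      Walk G (G.s e) w (e :: es)

/-- There is an edge from `u` to `v`. -/
def EdgeRel (G : LGraph A) (u v : G.V) : Prop := ∃ e : G.E, G.s e = u ∧ G.t e = v

/-- `v` is reachable from `u` by a directed walk. -/
def Reach (G : LGraph A) : G.V → G.V → Prop := Relation.ReflTransGen G.EdgeRel

/-- `u` and `v` lie in the same strongly connected component. -/
def SameComp (G : LGraph A) (u v : G.V) : Prop := G.Reach u v ∧ G.Reach v u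

/-- The number of strongly connected components of `G`. -/
noncomputable def numComponents (G : LGraph A) : ℕ :=
  Nat.card {K : Set G.V // ∃ v : G.V, K = {u : G.V | G.SameComp v u}}

/-- The restricted follower set of `v` : words labelling walks starting at `v`
that stay inside the strongly connected component of `v`. -/
def FollowR (G : LGraph A) (v : G.V) : Set (List A) :=
  {w | ∃ (u : G.V) (es : List G.E), G.Walk v u es ∧ es.map G.lab = w ∧
        ∀ e ∈ es, G.SameComp v (G.s e) ∧ G.SameComp v (G.t e)}

/-- Two vertices are linked iff their restricted follower sets have infinite
intersection. -/
def Linked (G : LGraph A) (u v : G.V) : Prop := (G.FollowR u ∩ G.FollowR v).Infinite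

/-- `≈` : the reflexive-transitive closure of the linked relation. -/
def Approx (G : LGraph A) : G.V → G.V → Prop := Relation.ReflTransGen G.Linked

/-- One step in the linking graph `G/≈` (lifted to `G`): either an edge of `G`
or a jump between linked vertices. -/
def GenStep (G : LGraph A) (u v : G.V) : Prop := G.EdgeRel u v ∨ G.Linked u v

/-- Reachability in the linking graph `G/≈`, expressed on vertices of `G`. -/
def GenReach (G : LGraph A) : G.V → G.V → Prop := Relation.ReflTransGen G.GenStep

/-- The language of `G` : words labelling finite walks in `G`. -/
def Lang (G : LGraph A) : Set (List A) :=
  {w | ∃ (u v : G.V) (es : List G.E), G.Walk u v es ∧ es.map G.lab = w}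

/-- `w` has a presentation in the subgraph of `G` induced by the vertex set `S`. -/
def PresIn (G : LGraph A) (S : Set G.V) (w : List A) : Prop :=
  ∃ (u v : G.V) (es : List G.E), G.Walk u v es ∧ es.map G.lab = w ∧
    u ∈ S ∧ v ∈ S ∧ ∀ e ∈ es, G.s e ∈ S ∧ G.t e ∈ S

/-- A presentation of the first `n` letters of `w`, with explicit vertex
sequence `v` and edge sequence `e`. -/
def PresFun (G : LGraph A) (n : ℕ) (w : ℕ → A) (v : ℕ → G.V) (e : ℕ → G.E) : Prop :=
  ∀ i < n, G.s (e i) = v i ∧ G.t (e i) = v (i + 1) ∧ G.lab (e i) = w i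

/-- `S` is a union of `≈`-equivalence classes, i.e. `S = π⁻¹(π(S))` for the
projection `π : G → G/≈`. -/
def SaturatedSet (G : LGraph A) (S : Set G.V) : Prop :=
  ∀ u v : G.V, G.Approx u v → (u ∈ S ↔ v ∈ S)

/-- No edge leaves `S` : together with saturation this says that the image of
`S` in `G/≈` is a terminal subgraph. -/
def ForwardClosed (G : LGraph A) (S : Set G.V) : Prop :=
  ∀ e : G.E, G.s e ∈ S → G.t e ∈ S

/-- Every vertex has an ingoing and an outgoing edge. -/
def Essential (G : LGraph A) : Prop :=
  ∀ v : G.V, (∃ e : G.E, G.t e = v) ∧ (∃ e : G.E, G.s e = v)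

/-- A biinfinite presentation of `x` (vertex sequence `v`, edge sequence `e`)
staying in the vertex set `S`. -/
def BiPresIn (G : LGraph A) (S : Set G.V) (x : ℤ → A) (v : ℤ → G.V) (e : ℤ → G.E) : Prop :=
  ∀ i : ℤ, G.s (e i) = v i ∧ G.t (e i) = v (i + 1) ∧ G.lab (e i) = x i ∧ v i ∈ S

/-- The subshift of biinfinite label sequences of biinfinite walks of `G`
staying in `S`. -/
def SigmaIn (G : LGraph A) (S : Set G.V) : Set (ℤ → A) :=
  {x | ∃ v e, G.BiPresIn S x v e}

/-- The sofic subshift `Σ(G)`. -/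
def Sigma' (G : LGraph A) : Set (ℤ → A) := G.SigmaIn Set.univ

/-- The linking graph `G/≈` is strongly connected. -/
def StronglyConnectedQuot (G : LGraph A) : Prop := ∀ u v : G.V, G.GenReach u v

/-- The linking graph `G/≈` is periodic : its vertices can be partitioned into
`n > 1` classes (indexed by `ZMod n`, each a union of `≈`-classes) so that every
edge advances the class index by one. -/
def PeriodicQuot (G : LGraph A) : Prop :=
  ∃ n : ℕ, 1 < n ∧ ∃ c : G.V → ZMod n,
    (∀ u v : G.V, G.Approx u v → c u = c v) ∧ ∀ e : G.E, c (G.t e) = c (G.s e) + 1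

/-- The label product `G * H`. -/
def labelProduct (G H : LGraph A) : LGraph A where
  V := G.V × H.V
  E := {p : G.E × H.E // G.lab p.1 = H.lab p.2}
  s := fun p => (G.s p.1.1, H.s p.1.2)
  t := fun p => (G.t p.1.1, H.t p.1.2)
  lab := fun p => G.lab p.1.1

end LGraph

section Subshift

variable {A : Type}

/-- The shift map `σ`. -/
def shift (x : ℤ → A) : ℤ → A := fun i => x (i + 1)

open Classical in
/-- The metric `ρ(x,y) = 2^{-n}` where `n` is minimal with `x_n ≠ y_n` or
`x_{-n} ≠ y_{-n}` (and `ρ(x,x) = 0`). -/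
noncomputable def rho (x y : ℤ → A) : ℝ :=
  if x = y then 0
  else (2 : ℝ) ^ (-((sInf {n : ℕ | ∃ i : ℤ, i.natAbs = n ∧ x i ≠ y i} : ℕ) : ℤ))

/-- Closedness with respect to the metric `rho`. -/
def RhoClosed (Sig : Set (ℤ → A)) : Prop :=
  ∀ x : ℤ → A, (∀ ε : ℝ, 0 < ε → ∃ y ∈ Sig, rho x y < ε) → x ∈ Sig

/-- A subshift : a closed, strongly shift-invariant subset of `A^ℤ`. -/
def IsSubshift (Sig : Set (ℤ → A)) : Prop :=
  RhoClosed Sig ∧ shift '' Sig = Sig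

/-- The language of the subshift `Sig` : all finite factors of its points. -/
def lang (Sig : Set (ℤ → A)) : Set (List A) :=
  {w | ∃ x ∈ Sig, ∃ k : ℤ, ∀ (i : ℕ) (h : i < w.length), w.get ⟨i, h⟩ = x (k + i)}

/-- The central factor `x_{[-l,l]}` of a biinfinite word. -/
def central (x : ℤ → A) (l : ℕ) : List A :=
  (List.range (2 * l + 1)).map fun i => x ((i : ℤ) - (l : ℤ))

/-- `ChainWord L u v n w` : `w` is a chain of length `n` from `u` to `v` in the
language `L` : `|w| = n + |u|`, `w` has prefix `u` and suffix `v`, and every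
factor of `w` of length at most `|u|` belongs to `L`. -/
def ChainWord (L : Set (List A)) (u v : List A) (n : ℕ) (w : List A) : Prop :=
  u.length = v.length ∧ w.length = n + u.length ∧
  w.take u.length = u ∧ w.drop n = v ∧
  ∀ z : List A, z <:+: w → z.length ≤ u.length → z ∈ L

/-- An `ε`-chain of length `n > 0` from `x` to `y` inside `Sig`. -/
def EpsChain (Sig : Set (ℤ → A)) (ε : ℝ) (n : ℕ) (x y : ℤ → A) : Prop :=
  0 < n ∧ ∃ z : ℕ → ℤ → A, z 0 = x ∧ z n = y ∧ (∀ i ≤ n, z i ∈ Sig) ∧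
    ∀ i < n, rho (shift (z i)) (z (i + 1)) < ε

/-- The chain relation of `(Sig, σ)`. -/
def ChainRel (Sig : Set (ℤ → A)) (x y : ℤ → A) : Prop :=
  ∀ ε : ℝ, 0 < ε → ∃ n : ℕ, EpsChain Sig ε n x y

/-- Chain-transitivity. -/
def ChainTransitive (Sig : Set (ℤ → A)) : Prop :=
  ∀ x ∈ Sig, ∀ y ∈ Sig, ChainRel Sig x y

/-- Chain-mixing. -/
def ChainMixing (Sig : Set (ℤ → A)) : Prop :=
  ∀ x ∈ Sig, ∀ y ∈ Sig, ∀ ε : ℝ, 0 < ε → ∃ k : ℕ, ∀ n, k < n → EpsChain Sig ε n x y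

/-- Distance from a point to a set, with respect to `rho`. -/
noncomputable def distTo (x : ℤ → A) (Y : Set (ℤ → A)) : ℝ := sInf (rho x '' Y)

/-- `Y` is an attractor of the dynamical system `(Sig, σ)`. -/
def IsAttractor (Sig Y : Set (ℤ → A)) : Prop :=
  Y.Nonempty ∧ Y ⊆ Sig ∧ RhoClosed Y ∧ shift '' Y = Y ∧
  (∀ ε : ℝ, 0 < ε → ∃ δ : ℝ, 0 < δ ∧ ∀ x ∈ Sig, distTo x Y < δ →
    ∀ n : ℕ, 0 < n → distTo (shift^[n] x) Y < ε) ∧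
  (∃ δ : ℝ, 0 < δ ∧ ∀ x ∈ Sig, distTo x Y < δ →
    Filter.Tendsto (fun n : ℕ => distTo (shift^[n] x) Y) Filter.atTop (nhds 0))

/-! ### Auxiliary infrastructure -/

section Aux

variable {A : Type}

open Relation

/-- Agreement on a symmetric window gives a small `rho`. -/
lemma rho_le_of_agree {x y : ℤ → A} {N : ℕ}
    (h : ∀ i : ℤ, i.natAbs ≤ N → x i = y i) :
    rho x y ≤ (2 : ℝ) ^ (-(N : ℤ) - 1) := by
  unfold rho
  split
  · positivity
  · rename_i hxy
    set D := {n : ℕ | ∃ i : ℤ, i.natAbs = n ∧ x i ≠ y i} with hD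
    have hne : D.Nonempty := by
      by_contra hcon
      apply hxy
      funext i
      by_contra hne
      exact hcon ⟨i.natAbs, i, rfl, hne⟩
    have hge : (N + 1 : ℕ) ≤ sInf D := by
      apply le_csInf hne
      intro b hb
      obtain ⟨i, hi, hne⟩ := hb
      by_contra hlt
      exact hne (h i (by omega))
    have : (-((sInf D : ℕ) : ℤ)) ≤ -(N : ℤ) - 1 := by
      have h2 : ((N:ℤ) + 1) ≤ ((sInf D : ℕ) : ℤ) := by exact_mod_cast hge
      omega
    exact zpow_le_zpow_right₀ one_le_two this

/-- A small `rho` gives agreement on a symmetric window. -/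
lemma agree_of_rho_lt {x y : ℤ → A} {N : ℕ}
    (h : rho x y < (2 : ℝ) ^ (-(N : ℤ))) :
    ∀ i : ℤ, i.natAbs ≤ N → x i = y i := by
  intro i hi
  unfold rho at h
  split at h
  · rename_i hxy; rw [hxy]
  · rename_i hxy
    set D := {n : ℕ | ∃ i : ℤ, i.natAbs = n ∧ x i ≠ y i} with hD
    have hNlt : ((sInf D : ℕ) : ℤ) ≤ (N : ℤ) → False := by
      intro hc
      have h2 : (2:ℝ) ^ (-(N:ℤ)) ≤ 2 ^ (-((sInf D : ℕ) : ℤ)) :=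
        zpow_le_zpow_right₀ one_le_two (by omega)
      linarith
    by_contra hne
    have hmem : i.natAbs ∈ D := ⟨i, rfl, hne⟩
    have h1 : sInf D ≤ N := le_trans (Nat.sInf_le hmem) hi
    exact hNlt (by exact_mod_cast h1)

namespace LGraph

variable {G : LGraph A}

lemma PresFun.mono {n m : ℕ} {w : ℕ → A} {v : ℕ → G.V} {e : ℕ → G.E}
    (h : G.PresFun n w v e) (hm : m ≤ n) : G.PresFun m w v e :=
  fun i hi => h i (lt_of_lt_of_le hi hm)

lemma PresFun.congr_word {n : ℕ} {w w' : ℕ → A} {v : ℕ → G.V} {e : ℕ → G.E}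
    (h : G.PresFun n w v e) (hw : ∀ i < n, w i = w' i) : G.PresFun n w' v e := by
  intro i hi
  obtain ⟨h1, h2, h3⟩ := h i hi
  exact ⟨h1, h2, by rw [h3, hw i hi]⟩

lemma PresFun.shift {n : ℕ} {w : ℕ → A} {v : ℕ → G.V} {e : ℕ → G.E}
    (h : G.PresFun n w v e) (a m : ℕ) (ham : a + m ≤ n) :
    G.PresFun m (fun i => w (a + i)) (fun i => v (a + i)) (fun i => e (a + i)) := by
  intro i hi
  obtain ⟨h1, h2, h3⟩ := h (a + i) (by omega)
  refine ⟨h1, ?_, h3⟩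
  rw [h2]; ring_nf

lemma PresFun.snoc {n : ℕ} {w : ℕ → A} {v : ℕ → G.V} {e : ℕ → G.E} {f : G.E}
    (h : G.PresFun n w v e) (hf : G.s f = v n) :
    G.PresFun (n + 1) (fun i => if i < n then w i else G.lab f)
      (fun i => if i ≤ n then v i else G.t f)
      (fun i => if i < n then e i else f) := by
  intro i hi
  dsimp only
  by_cases hin : i < n
  · obtain ⟨h1, h2, h3⟩ := h i hin
    simp only [if_pos hin, if_pos (by omega : i ≤ n), if_pos (by omega : i + 1 ≤ n)]
    exact ⟨h1, h2, h3⟩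
  · have hieq : i = n := by omega
    rw [hieq]
    rw [if_neg (lt_irrefl n), if_pos (le_refl n), if_neg (show ¬ n + 1 ≤ n by omega)]
    refine ⟨hf, rfl, ?_⟩
    rw [if_neg (lt_irrefl n)]

lemma PresFun.cat {l r : ℕ} {w₁ w₂ : ℕ → A} {v₁ v₂ : ℕ → G.V} {e₁ e₂ : ℕ → G.E}
    (h₁ : G.PresFun l w₁ v₁ e₁) (h₂ : G.PresFun r w₂ v₂ e₂) (hj : v₁ l = v₂ 0) :
    G.PresFun (l + r) (fun i => if i < l then w₁ i else w₂ (i - l))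
      (fun i => if i < l then v₁ i else v₂ (i - l))
      (fun i => if i < l then e₁ i else e₂ (i - l)) := by
  intro i hi
  by_cases hil : i < l
  · obtain ⟨h1, h2, h3⟩ := h₁ i hil
    by_cases hil1 : i + 1 < l
    · simp only [if_pos hil, if_pos hil1]
      exact ⟨h1, h2, h3⟩
    · have : i + 1 = l := by omega
      simp only [if_pos hil, if_neg hil1]
      refine ⟨h1, ?_, h3⟩
      rw [h2, this, hj]
      simp
  · obtain ⟨h1, h2, h3⟩ := h₂ (i - l) (by omega)
    simp only [if_neg hil, if_neg (by omega : ¬ i + 1 < l)]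
    refine ⟨h1, ?_, h3⟩
    rw [h2]
    congr 1
    omega

/-- Reachability along a finite presentation. -/
lemma PresFun.reach {n : ℕ} {w : ℕ → A} {v : ℕ → G.V} {e : ℕ → G.E}
    (h : G.PresFun n w v e) : ∀ d i, i + d ≤ n → G.Reach (v i) (v (i + d)) := by
  intro d
  induction d with
  | zero => intro i _; exact Relation.ReflTransGen.refl
  | succ d ih =>
    intro i hin
    have h1 := ih i (by omega)
    obtain ⟨hs, ht, _⟩ := h (i + d) (by omega)
    exact Relation.ReflTransGen.tail h1 ⟨e (i + d), hs, ht⟩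

lemma PresFun.reach' {n : ℕ} {w : ℕ → A} {v : ℕ → G.V} {e : ℕ → G.E}
    (h : G.PresFun n w v e) {i j : ℕ} (hij : i ≤ j) (hj : j ≤ n) :
    G.Reach (v i) (v j) := by
  have := h.reach (j - i) i (by omega)
  rwa [show i + (j - i) = j by omega] at this

/-- Membership in a forward-closed set propagates along presentations. -/
lemma PresFun.mem_S {S : Set G.V} (hS : ∀ f : G.E, G.s f ∈ S → G.t f ∈ S)
    {n : ℕ} {w : ℕ → A} {v : ℕ → G.V} {e : ℕ → G.E}
    (h : G.PresFun n w v e) {i j : ℕ} (hij : i ≤ j) (hj : j ≤ n) (hv : v i ∈ S) :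
    v j ∈ S := by
  obtain ⟨d, rfl⟩ : ∃ d, j = i + d := ⟨j - i, by omega⟩
  induction d with
  | zero => exact hv
  | succ d ih =>
    obtain ⟨hs, ht, _⟩ := h (i + d) (by omega)
    have hmem := ih (by omega) (by omega)
    show v (i + d + 1) ∈ S
    rw [← ht]
    apply hS
    rwa [hs]

end LGraph

end Aux

section Aux2

variable {A : Type}

namespace LGraph

variable {G : LGraph A}

lemma PresFun.toWalk {n : ℕ} {w : ℕ → A} {v : ℕ → G.V} {e : ℕ → G.E}
    (h : G.PresFun n w v e) :
    G.Walk (v 0) (v n) (List.ofFn (fun i : Fin n => e i)) := by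
  induction n generalizing w v e with
  | zero => simpa using Walk.nil (v 0)
  | succ n ih =>
    obtain ⟨hs, ht, _⟩ := h 0 (by omega)
    rw [List.ofFn_succ, ← hs]
    refine Walk.cons (e 0) ?_
    have h2 := ih (w := fun i => w (i + 1)) (v := fun i => v (i + 1)) (e := fun i => e (i + 1))
      (fun i hi => by
        obtain ⟨a1, a2, a3⟩ := h (i + 1) (by omega)
        exact ⟨a1, a2, a3⟩)
    rw [ht]
    exact h2

lemma PresFun.labels {n : ℕ} {w : ℕ → A} {v : ℕ → G.V} {e : ℕ → G.E}
    (h : G.PresFun n w v e) :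
    (List.ofFn (fun i : Fin n => e i)).map G.lab = List.ofFn (fun i : Fin n => w i) := by
  rw [List.map_ofFn]
  exact congrArg List.ofFn (funext fun i => (h i i.isLt).2.2)

lemma Walk.toPresFun [Nonempty G.E] {a b : G.V} {es : List G.E} (h : G.Walk a b es) :
    ∃ (v : ℕ → G.V) (e : ℕ → G.E), v 0 = a ∧ v es.length = b ∧
      (∀ (i : ℕ) (hi : i < es.length), e i = es.get ⟨i, hi⟩) ∧
      G.PresFun es.length (fun i => G.lab (e i)) v e := by
  induction h with
  | nil c =>
    exact ⟨fun _ => c, fun _ => Classical.arbitrary _, rfl, rfl,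
      fun i hi => by simp at hi, fun i hi => by simp at hi⟩
  | @cons b' es' f h ih =>
    obtain ⟨v, e, hv0, hvn, hee, hp⟩ := ih
    refine ⟨fun i => match i with | 0 => G.s f | (j+1) => v j,
            fun i => match i with | 0 => f | (j+1) => e j, rfl, ?_, ?_, ?_⟩
    · simpa using hvn
    · intro i hi
      match i with
      | 0 => rfl
      | (j+1) =>
        simp only [List.length_cons] at hi
        have := hee j (by omega)
        simpa using this
    · intro i hi
      simp only [List.length_cons] at hi
      match i with
      | 0 => exact ⟨rfl, by simpa using hv0.symm, rfl⟩
      | (j+1) =>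
        obtain ⟨a1, a2, a3⟩ := hp j (by omega)
        exact ⟨a1, a2, a3⟩

lemma Reach.toPresFun [Nonempty G.E] {a b : G.V} (h : G.Reach a b) :
    ∃ (ρ : ℕ) (v : ℕ → G.V) (e : ℕ → G.E), v 0 = a ∧ v ρ = b ∧
      G.PresFun ρ (fun i => G.lab (e i)) v e := by
  induction h with
  | refl => exact ⟨0, fun _ => a, fun _ => Classical.arbitrary _, rfl, rfl, fun i hi => by omega⟩
  | tail hab hbc ih =>
    obtain ⟨ρ, v, e, h0, hn, hp⟩ := ih
    obtain ⟨f, hs, ht⟩ := hbc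
    have hsnoc := hp.snoc (f := f) (by rw [hs, hn])
    refine ⟨ρ + 1, _, _, ?_, ?_, hsnoc.congr_word ?_⟩
    · simp [h0]
    · simp [ht]
    · intro i hi
      by_cases hc : i < ρ <;> simp [hc]

lemma pigeon {β : Type} [Finite β] (f : ℕ → β) (m : ℕ) :
    ∃ i j, m ≤ i ∧ i < j ∧ j ≤ m + Nat.card β ∧ f i = f j := by
  have : Fintype β := Fintype.ofFinite β
  have hcard : Fintype.card β < Fintype.card (Fin (Nat.card β + 1)) := by
    simp [Nat.card_eq_fintype_card]
  obtain ⟨x, y, hxy, hf⟩ :=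
    Fintype.exists_ne_map_eq_of_card_lt (fun i : Fin (Nat.card β + 1) => f (m + i)) hcard
  have hx := x.isLt
  have hy := y.isLt
  rcases lt_or_gt_of_ne (fun hc : (x:ℕ) = (y:ℕ) => hxy (Fin.ext hc)) with hlt | hgt
  · exact ⟨m + x, m + y, by omega, by omega, by omega, hf⟩
  · exact ⟨m + y, m + x, by omega, by omega, by omega, hf.symm⟩

lemma followR_cycle_pow {n : ℕ} {w : ℕ → A} {v : ℕ → G.V} {e : ℕ → G.E}
    (h : G.PresFun n w v e) {i j : ℕ} (hij : i < j) (hj : j ≤ n) (hv : v i = v j) (k : ℕ) :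
    List.ofFn (fun l : Fin (k * (j - i)) => w (i + ((l : ℕ) % (j - i)))) ∈ G.FollowR (v i) := by
  set d := j - i with hd
  have hd1 : 0 < d := by omega
  have hcyc : G.PresFun (k * d) (fun l => w (i + l % d))
      (fun l => v (i + l % d)) (fun l => e (i + l % d)) := by
    intro l hl
    have hld : l % d < d := Nat.mod_lt _ hd1
    obtain ⟨h1, h2, h3⟩ := h (i + l % d) (by omega)
    refine ⟨h1, ?_, h3⟩
    rw [h2]
    by_cases hc : l % d + 1 < d
    · have hmod : (l + 1) % d = l % d + 1 := by
        rw [← Nat.mod_add_mod]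
        exact Nat.mod_eq_of_lt hc
      show v (i + l % d + 1) = v (i + (l + 1) % d)
      congr 1
      omega
    · have hc2 : l % d + 1 = d := by omega
      have hmod : (l + 1) % d = 0 := by rw [← Nat.mod_add_mod, hc2, Nat.mod_self]
      show v (i + l % d + 1) = v (i + (l + 1) % d)
      rw [show i + l % d + 1 = j by omega, show i + (l + 1) % d = i by omega]
      exact hv.symm
  have hw := hcyc.toWalk
  have hlabs := hcyc.labels
  rw [show i + 0 % d = i by simp, show i + (k * d) % d = i by simp [Nat.mul_mod_left]] at hw
  refine ⟨v i, _, hw, hlabs, ?_⟩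
  intro f hf
  rw [List.mem_ofFn] at hf
  obtain ⟨l, rfl⟩ := hf
  have hld : (l : ℕ) % d < d := Nat.mod_lt _ hd1
  obtain ⟨h1, h2, _⟩ := h (i + (l : ℕ) % d) (by omega)
  constructor
  · rw [h1]
    constructor
    · exact h.reach' (by omega) (by omega)
    · have := h.reach' (show i + (l:ℕ) % d ≤ j by omega) hj
      rwa [← hv] at this
  · rw [h2]
    constructor
    · exact h.reach' (by omega) (by omega)
    · have := h.reach' (show i + (l:ℕ) % d + 1 ≤ j by omega) hj
      rwa [← hv] at this

lemma linked_of_parallel {n : ℕ} {w : ℕ → A} {v1 v2 : ℕ → G.V} {e1 e2 : ℕ → G.E}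
    (h1 : G.PresFun n w v1 e1) (h2 : G.PresFun n w v2 e2) {i j : ℕ}
    (hij : i < j) (hj : j ≤ n) (hv1 : v1 i = v1 j) (hv2 : v2 i = v2 j) :
    G.Linked (v1 i) (v2 i) := by
  have hd1 : 0 < j - i := by omega
  apply Set.infinite_of_injective_forall_mem
    (f := fun k : ℕ => List.ofFn (fun l : Fin ((k+1) * (j - i)) => w (i + ((l : ℕ) % (j - i)))))
  · intro k k' hkk
    have hlen := congrArg List.length hkk
    simp only [List.length_ofFn] at hlen
    have := Nat.eq_of_mul_eq_mul_right hd1 hlen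
    omega
  · intro k
    exact ⟨followR_cycle_pow h1 hij hj hv1 (k+1), followR_cycle_pow h2 hij hj hv2 (k+1)⟩

lemma Linked.exists_long [Finite A] {u u' : G.V} (h : G.Linked u u') (M : ℕ) :
    ∃ w, w ∈ G.FollowR u ∩ G.FollowR u' ∧ M ≤ w.length := by
  by_contra hcon
  push_neg at hcon
  exact h (Set.Finite.subset (List.finite_length_lt A M)
    (fun w hw => by simpa using hcon w hw))

end LGraph

end Aux2

section Aux3

variable {A : Type}

namespace LGraph

variable {G : LGraph A}

noncomputable def fch (hG : G.Essential) : G.V → G.E := fun u => (hG u).2.choose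

lemma fch_s (hG : G.Essential) (u : G.V) : G.s (fch hG u) = u := (hG u).2.choose_spec

noncomputable def bch (hG : G.Essential) : G.V → G.E := fun u => (hG u).1.choose

lemma bch_t (hG : G.Essential) (u : G.V) : G.t (bch hG u) = u := (hG u).1.choose_spec

lemma BiPresIn.presFun {S : Set G.V} {x : ℤ → A} {v : ℤ → G.V} {e : ℤ → G.E}
    (h : G.BiPresIn S x v e) (t : ℤ) (m : ℕ) :
    G.PresFun m (fun k => x (t + k)) (fun k => v (t + k)) (fun k => e (t + k)) := by
  intro i hi
  obtain ⟨h1, h2, h3, _⟩ := h (t + i)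
  refine ⟨h1, ?_, h3⟩
  rw [h2]; congr 1; push_cast; ring

lemma BiPresIn.shift {S : Set G.V} {x : ℤ → A} {v : ℤ → G.V} {e : ℤ → G.E}
    (h : G.BiPresIn S x v e) (c : ℤ) :
    G.BiPresIn S (fun k => x (k + c)) (fun k => v (k + c)) (fun k => e (k + c)) := by
  intro i
  obtain ⟨h1, h2, h3, h4⟩ := h (i + c)
  exact ⟨h1, by rw [h2]; congr 1; ring, h3, h4⟩

lemma mem_S_of_presFun_vertices : True := trivial

/-- Any finite presentation extends to a point of `Σ(G)`, at any position. -/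
lemma exists_point_of_presFun (hG : G.Essential) {n : ℕ} {w : ℕ → A} {v : ℕ → G.V}
    {e : ℕ → G.E} (h : G.PresFun n w v e) (c : ℤ) :
    ∃ z : ℤ → A, z ∈ G.Sigma' ∧ ∀ i : ℕ, i < n → z (c + i) = w i := by
  classical
  -- backward and forward vertex chains
  let bv : ℕ → G.V := fun m => Nat.rec (v 0) (fun _ u => G.s (bch hG u)) m
  let fv : ℕ → G.V := fun m => Nat.rec (v n) (fun _ u => G.t (fch hG u)) m
  have bv0 : bv 0 = v 0 := rfl
  have bvs : ∀ m, bv (m + 1) = G.s (bch hG (bv m)) := fun m => rfl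
  have fv0 : fv 0 = v n := rfl
  have fvs : ∀ m, fv (m + 1) = G.t (fch hG (fv m)) := fun m => rfl
  let vz : ℤ → G.V := fun t =>
    if t < 0 then bv (-t).toNat else if t ≤ (n : ℤ) then v t.toNat else fv (t - n).toNat
  let ez : ℤ → G.E := fun t =>
    if t < 0 then bch hG (vz (t + 1)) else if t < (n : ℤ) then e t.toNat else fch hG (vz t)
  have hvz_mid : ∀ t : ℤ, 0 ≤ t → t ≤ n → vz t = v t.toNat := by
    intro t h1 h2
    simp only [vz, if_neg (by omega : ¬ t < 0), if_pos h2]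
  have hvz_neg : ∀ t : ℤ, t < 0 → vz t = bv (-t).toNat := by
    intro t h1; simp only [vz, if_pos h1]
  have hvz_pos : ∀ t : ℤ, (n : ℤ) < t → vz t = fv (t - n).toNat := by
    intro t h1
    simp only [vz, if_neg (by omega : ¬ t < 0), if_neg (by omega : ¬ t ≤ (n:ℤ))]
  have hbi : G.BiPresIn Set.univ (fun t => G.lab (ez t)) vz ez := by
    intro t
    refine ⟨?_, ?_, rfl, trivial⟩
    · -- source
      by_cases h1 : t < 0
      · have he : ez t = bch hG (vz (t + 1)) := if_pos h1
        rw [he]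
        by_cases h2 : t + 1 < 0
        · rw [hvz_neg _ h2, hvz_neg _ h1, show (-t).toNat = (-(t+1)).toNat + 1 by omega, bvs]
        · have ht1 : t + 1 = 0 := by omega
          rw [ht1, hvz_mid 0 le_rfl (by omega), hvz_neg _ h1,
            show (-t).toNat = 1 by omega]
          rw [show v (0:ℤ).toNat = bv 0 from rfl.trans bv0.symm]
          exact (bvs 0).symm
      · by_cases h2 : t < (n : ℤ)
        · have he : ez t = e t.toNat := by
            simp only [ez, if_neg h1, if_pos h2]
          rw [he, hvz_mid t (by omega) (by omega)]
          exact (h t.toNat (by omega)).1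
        · have he : ez t = fch hG (vz t) := by
            simp only [ez, if_neg h1, if_neg h2]
          rw [he, fch_s]
    · -- target
      by_cases h1 : t < 0
      · have he : ez t = bch hG (vz (t + 1)) := if_pos h1
        rw [he, bch_t]
      · by_cases h2 : t < (n : ℤ)
        · have he : ez t = e t.toNat := by
            simp only [ez, if_neg h1, if_pos h2]
          rw [he, hvz_mid (t+1) (by omega) (by omega), show (t+1).toNat = t.toNat + 1 by omega]
          exact (h t.toNat (by omega)).2.1
        · have he : ez t = fch hG (vz t) := by
            simp only [ez, if_neg h1, if_neg h2]
          rw [he]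
          by_cases h3 : t = (n : ℤ)
          · rw [h3, hvz_pos (n+1 : ℤ) (by omega), show ((n:ℤ)+1-n).toNat = 1 by omega,
              hvz_mid n (by omega) le_rfl, show ((n:ℤ)).toNat = n by omega]
            rw [show v n = fv 0 from fv0.symm]
            exact (fvs 0).symm
          · rw [hvz_pos t (by omega), hvz_pos (t+1) (by omega),
              show (t+1-n).toNat = (t-n).toNat + 1 by omega, fvs]
    -- done
  -- shift to position c
  refine ⟨fun t => G.lab (ez (t - c)), ⟨fun t => vz (t - c), fun t => ez (t - c), ?_⟩, ?_⟩
  · have := hbi.shift (-c)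
    convert this using 2 <;> ring_nf
  · intro i hi
    have he : ez (i : ℤ) = e i := by
      simp only [ez, if_neg (by omega : ¬ (i:ℤ) < 0),
        if_pos (show (i:ℤ) < (n:ℤ) by exact_mod_cast hi), Int.toNat_natCast]
    show G.lab (ez (c + (i:ℤ) - c)) = w i
    rw [show c + (i:ℤ) - c = (i:ℤ) by ring, he]
    exact (h i hi).2.2

/-- A cycle gives a periodic point together with its presentation. -/
lemma exists_periodic_point {d : ℕ} (hd : 0 < d) {w : ℕ → A} {v : ℕ → G.V} {e : ℕ → G.E}
    (h : G.PresFun d w v e) (hv : v d = v 0) :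
    ∃ (z : ℤ → A) (vz : ℤ → G.V) (ez : ℤ → G.E), G.BiPresIn Set.univ z vz ez ∧
      ∀ t : ℤ, ∃ l : ℕ, l < d ∧ vz t = v l := by
  have hdz : (d : ℤ) ≠ 0 := by exact_mod_cast hd.ne'
  have hmod : ∀ t : ℤ, 0 ≤ t % d ∧ t % d < d := fun t =>
    ⟨Int.emod_nonneg t hdz, Int.emod_lt_of_pos t (by exact_mod_cast hd)⟩
  refine ⟨fun t => G.lab (e ((t % d).toNat)), fun t => v ((t % d).toNat),
    fun t => e ((t % d).toNat), ?_, ?_⟩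
  · intro t
    set l := (t % d).toNat with hl
    have hld : l < d := by have := hmod t; omega
    obtain ⟨h1, h2, _⟩ := h l hld
    refine ⟨h1, ?_, rfl, trivial⟩
    rw [h2]
    have htl : t % d = (l : ℤ) := by have := hmod t; omega
    have hstep : (t + 1) % d = ((l : ℤ) + 1) % d := by
      have hdiv := Int.emod_add_mul_ediv t (d : ℤ)
      rw [show t + 1 = ((l:ℤ) + 1) + ((d:ℤ)) * (t / d) by omega]
      exact Int.add_mul_emod_self_left ((l:ℤ)+1) (d:ℤ) (t / (d:ℤ))
    show v (l + 1) = v (((t + 1) % d).toNat)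
    by_cases hc : l + 1 < d
    · have hval : (t + 1) % d = (l : ℤ) + 1 := by
        rw [hstep]
        exact Int.emod_eq_of_lt (by omega) (by exact_mod_cast hc)
      rw [show ((t+1) % (d:ℤ)).toNat = l + 1 by omega]
    · have hc2 : (l : ℤ) + 1 = (d : ℤ) := by omega
      have hval : (t + 1) % d = 0 := by rw [hstep, hc2, Int.emod_self]
      rw [show ((t+1) % (d:ℤ)).toNat = 0 by omega, show l + 1 = d by omega, hv]
  · intro t
    exact ⟨(t % d).toNat, by have := hmod t; omega, rfl⟩

end LGraph

end Aux3

section Aux4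

variable {A : Type}

namespace LGraph

variable {G : LGraph A}

/-- Concatenation of three word-functions. -/
def cat3 (l m : ℕ) (w1 g w2 : ℕ → A) : ℕ → A :=
  fun i => if i < l then w1 i else if i < l + m then g (i - l) else w2 (i - l - m)

/-- The glue lemma: between linked-reachable vertices there is a glue word such
that gluing any long enough incoming walk and outgoing walk yields a word all of
whose `M`-windows are presentable. -/
lemma glue_spec [Finite A] (a₀ : A) {b c : G.V} (hbc : G.GenReach b c)
    (M : ℕ) (hM : 1 ≤ M) (hE : Nonempty G.E) :
    ∃ (m : ℕ) (g : ℕ → A),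
      ∀ (l : ℕ) (w1 : ℕ → A) (v1 : ℕ → G.V) (e1 : ℕ → G.E),
        M ≤ l → G.PresFun l w1 v1 e1 → v1 l = b →
      ∀ (r : ℕ) (w2 : ℕ → A) (v2 : ℕ → G.V) (e2 : ℕ → G.E),
        M ≤ r → G.PresFun r w2 v2 e2 → v2 0 = c →
      ∀ t : ℕ, t + M ≤ l + m + r →
        ∃ v e, G.PresFun M (fun k => cat3 l m w1 g w2 (t + k)) v e := by
  induction hbc using Relation.ReflTransGen.head_induction_on with
  | refl =>
    refine ⟨0, fun _ => a₀, ?_⟩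
    intro l w1 v1 e1 hl h1 hv1 r w2 v2 e2 hr h2 hv2 t ht
    have hcat := h1.cat h2 (by rw [hv1, hv2])
    have hwin := hcat.shift t M (by omega)
    refine ⟨_, _, hwin.congr_word ?_⟩
    intro k hk
    simp only [cat3]
    split_ifs with hc1 hc2 <;> first | rfl | omega | (congr 1; omega)
  | @head a a' hstep hrest ih =>
    rcases hstep with ⟨f, hfs, hft⟩ | hlk
    · -- edge step
      obtain ⟨m', g', hfits⟩ := ih
      refine ⟨m' + 1, fun i => if i = 0 then G.lab f else g' (i - 1), ?_⟩
      intro l w1 v1 e1 hl h1 hv1 r w2 v2 e2 hr h2 hv2 t ht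
      have hsnoc := h1.snoc (f := f) (by rw [hfs, hv1])
      have hend : (fun i => if i ≤ l then v1 i else G.t f) (l + 1) = a' := by
        simp only [if_neg (by omega : ¬ l + 1 ≤ l)]
        exact hft
      obtain ⟨v, e, hp⟩ := hfits (l + 1) _ _ _ (by omega) hsnoc hend
        r w2 v2 e2 hr h2 hv2 t (by omega)
      refine ⟨v, e, hp.congr_word ?_⟩
      intro k hk
      simp only [cat3]
      split_ifs <;> first | rfl | omega | (congr 1; omega)
    · -- linked step
      obtain ⟨m'', g'', hfits⟩ := ih
      obtain ⟨wl, ⟨hwa, hwb⟩, hlen⟩ := hlk.exists_long M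
      obtain ⟨u₁, esa, hwalka, hlaba, _⟩ := hwa
      obtain ⟨u₂, esb, hwalkb, hlabb, hsccb⟩ := hwb
      set mw := wl.length with hmw
      have hlena : esa.length = mw := by rw [hmw, ← hlaba, List.length_map]
      have hlenb : esb.length = mw := by rw [hmw, ← hlabb, List.length_map]
      obtain ⟨va, ea, hva0, hvan, heea, hpa⟩ := hwalka.toPresFun
      obtain ⟨vb, eb, hvb0, hvbn, heeb, hpb⟩ := hwalkb.toPresFun
      -- common word function
      set wfun : ℕ → A := fun i => wl.getD i a₀ with hwfun
      have hwords : ∀ (es : List G.E) (ee : ℕ → G.E), es.map G.lab = wl →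
          (∀ (i : ℕ) (hi : i < es.length), ee i = es.get ⟨i, hi⟩) →
          ∀ i < es.length, G.lab (ee i) = wfun i := by
        intro es ee hlabs hee i hi
        rw [hee i hi]
        simp only [hwfun]
        rw [← hlabs]
        rw [List.getD_eq_getElem (List.map G.lab es) a₀ (by simpa using hi)]
        simp only [List.get_eq_getElem, List.getElem_map]
      have hpa' : G.PresFun mw wfun va ea := by
        rw [← hlena]
        exact (hpa.congr_word (hwords esa ea hlaba heea))
      have hpb' : G.PresFun mw wfun vb eb := by
        rw [← hlenb]
        exact (hpb.congr_word (hwords esb eb hlabb heeb))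
      -- the endpoint of the b-side walk returns to a'
      have hmw1 : 1 ≤ mw := le_trans hM hlen
      have hreach : G.Reach (vb mw) a' := by
        have hmem : esb.get ⟨mw - 1, by omega⟩ ∈ esb := List.get_mem esb _
        have hscc := (hsccb _ hmem).2
        have ht' : G.t (eb (mw - 1)) = vb mw := by
          have := (hpb' (mw - 1) (by omega)).2.1
          rw [this]
          congr 1
          omega
        rw [← heeb (mw - 1) (by omega), ht'] at hscc
        exact hscc.2
      obtain ⟨ρ, vr, er, hvr0, hvrn, hpr⟩ := hreach.toPresFun
      set wr : ℕ → A := fun i => G.lab (er i) with hwr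
      refine ⟨mw + ρ + m'',
        fun i => if i < mw then wfun i else if i < mw + ρ then wr (i - mw) else g'' (i - mw - ρ), ?_⟩
      intro l w1 v1 e1 hl h1 hv1 r w2 v2 e2 hr h2 hv2 t ht
      set m := mw + ρ + m'' with hm
      -- pre-side composite walk : w1 · wfun
      have hcata := h1.cat hpa' (by rw [hv1, hva0])
      -- b'-side composite walk : wfun · wr , from a'
      have hcatq := hpb'.cat hpr (by rw [hvr0])
      have hcatq_end : (fun i => if i < mw then vb i else vr (i - mw)) (mw + ρ) = a' := by
        show (if mw + ρ < mw then vb (mw + ρ) else vr (mw + ρ - mw)) = a'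
        rw [if_neg (by omega : ¬ mw + ρ < mw), show mw + ρ - mw = ρ by omega]
        exact hvrn
      by_cases hsplit : t + M ≤ l + mw
      · -- window inside  w1 · wfun
        have hwin := hcata.shift t M (by omega)
        refine ⟨_, _, hwin.congr_word ?_⟩
        intro k hk
        simp only [cat3]
        by_cases hc1 : t + k < l
        · rw [if_pos hc1, if_pos hc1]
        · rw [if_neg hc1, if_neg hc1, if_pos (by omega : t + k < l + m)]
          rw [if_pos (by omega : t + k - l < mw)]
      · -- window inside the region handled by the induction hypothesis
        have htl : l ≤ t := by omega
        obtain ⟨v, e, hp⟩ := hfits (mw + ρ) _ _ _ (by omega) hcatq hcatq_end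
          r w2 v2 e2 hr h2 hv2 (t - l) (by omega)
        refine ⟨v, e, hp.congr_word ?_⟩
        intro k hk
        have hidx : t - l + k + l = t + k := by omega
        simp only [cat3]
        by_cases hc1 : t - l + k < mw
        · rw [if_pos (by omega : t - l + k < mw + ρ)]
          rw [if_pos hc1, if_neg (by omega : ¬ t + k < l), if_pos (by omega : t + k < l + m)]
          rw [show t + k - l = t - l + k by omega]
          rw [if_pos hc1]
        · by_cases hc2 : t - l + k < mw + ρ
          · rw [if_pos hc2, if_neg hc1, if_neg (by omega : ¬ t + k < l),
              if_pos (by omega : t + k < l + m), show t + k - l = t - l + k by omega,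
              if_neg hc1, if_pos hc2]
          · by_cases hc3 : t - l + k < mw + ρ + m''
            · rw [if_neg hc2, if_pos hc3, if_neg (by omega : ¬ t + k < l),
                if_pos (by omega : t + k < l + m), show t + k - l = t - l + k by omega,
                if_neg hc1, if_neg hc2]
              congr 1
              omega
            · rw [if_neg hc2, if_neg hc3, if_neg (by omega : ¬ t + k < l),
                if_neg (by omega : ¬ t + k < l + m)]
              congr 1
              omega

end LGraph

end Aux4

section Backward

variable {A : Type}

open LGraph

lemma chainTransitive_of_SC [Finite A] (G : LGraph A) (hG : G.Essential)
    (hsc : G.StronglyConnectedQuot) : ChainTransitive G.Sigma' := by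
  intro x hx y hy ε hε
  obtain ⟨vx, ex, hbx⟩ := hx
  obtain ⟨vy, ey, hby⟩ := hy
  have hE : Nonempty G.E := ⟨ex 0⟩
  set a₀ : A := x 0 with ha₀
  -- choose the window size
  obtain ⟨N, hN0⟩ := exists_pow_lt_of_lt_one hε (by norm_num : (1/2:ℝ) < 1)
  have hN : (2:ℝ) ^ (-(N:ℤ) - 1) < ε := by
    have h2 : (2:ℝ)^(-(N:ℤ)-1) = (1/2:ℝ)^(N+1) := by
      have e1 : (2:ℝ)^(-(N:ℤ)-1) = ((2:ℝ)^((N:ℕ)+1))⁻¹ := by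
        rw [← zpow_natCast (2:ℝ) (N+1), ← zpow_neg]
        congr 1; push_cast; ring
      rw [e1, div_pow, one_pow, one_div]
    have h3 : (1/2:ℝ)^(N+1) ≤ (1/2)^N :=
      pow_le_pow_of_le_one (by norm_num) (by norm_num) (by omega)
    rw [h2]; linarith
  set M := 2 * N + 2 with hM
  -- pre-walk from x ending at b, post-walk from y starting at c
  set b := vx ((N:ℤ) + 2) with hb
  set c := vy (-(N:ℤ) - 1) with hc
  have hpre := hbx.presFun ((N:ℤ) + 2 - M) M
  have hpre_end : (fun k : ℕ => vx ((N:ℤ) + 2 - M + k)) M = b := by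
    rw [hb]; congr 1; push_cast; ring
  have hpost := hby.presFun (-(N:ℤ) - 1) M
  have hpost_start : (fun k : ℕ => vy (-(N:ℤ) - 1 + k)) 0 = c := by
    rw [hc]; congr 1; push_cast; ring
  obtain ⟨m, g, hfits⟩ := glue_spec a₀ (hsc b c) M (by omega) hE
  set n := 2 * N + 3 + m with hn
  -- the glued biinfinite word
  set U : ℤ → A := fun t =>
    if t ≤ (N:ℤ) + 1 then x t
    else if t ≤ (N:ℤ) + 1 + m then g (t - N - 2).toNat
    else y (t - n) with hU
  have hUx : ∀ t : ℤ, t ≤ (N:ℤ) + 1 → U t = x t := by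
    intro t ht; simp only [hU, if_pos ht]
  have hUy : ∀ t : ℤ, (n:ℤ) - N - 1 ≤ t → U t = y (t - n) := by
    intro t ht
    have h1 : ¬ t ≤ (N:ℤ) + 1 := by simp only [hn] at ht ⊢; push_cast at ht ⊢; omega
    have h2 : ¬ t ≤ (N:ℤ) + 1 + m := by simp only [hn] at ht ⊢; push_cast at ht ⊢; omega
    simp only [hU, if_neg h1, if_neg h2]
  -- every M-window of U is presentable
  have hwinpres : ∀ t : ℤ, ∃ v e, G.PresFun M (fun l => U (t + l)) v e := by
    intro t
    by_cases hA : t + M ≤ (N:ℤ) + 2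
    · refine ⟨_, _, (hbx.presFun t M).congr_word ?_⟩
      intro i hi
      exact (hUx (t + i) (by omega)).symm
    · by_cases hB : (N:ℤ) + 2 + m ≤ t
      · refine ⟨_, _, (hby.presFun (t - n) M).congr_word ?_⟩
        intro i hi
        have := hUy (t + i) (by simp only [hn]; push_cast; omega)
        rw [this]
        congr 1
        ring
      · -- middle region : use the glue property
        push_neg at hA hB
        set t' := (t - ((N:ℤ) + 2 - M)).toNat with ht'
        have ht'cast : (t' : ℤ) = t - ((N:ℤ) + 2 - M) := by
          rw [ht']
          rw [Int.toNat_of_nonneg (by push_cast; omega)]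
        obtain ⟨v, e, hp⟩ := hfits M _ _ _ le_rfl hpre hpre_end M _ _ _ le_rfl hpost
          hpost_start t' (by push_cast at ht'cast ⊢; omega)
        refine ⟨v, e, hp.congr_word ?_⟩
        intro k hk
        have hpos : ((N:ℤ) + 2 - M) + (t' + k) = t + k := by push_cast at ht'cast ⊢; omega
        simp only [cat3]
        by_cases hc1 : t' + k < M
        · rw [if_pos hc1]
          have h1 : t + k ≤ (N:ℤ) + 1 := by push_cast at hpos ⊢; omega
          rw [hUx _ h1]
          have he2 : (↑N + 2 - ↑M + ↑(t' + k) : ℤ) = t + ↑k := by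
            push_cast
            push_cast at ht'cast
            omega
          rw [he2]
        · by_cases hc2 : t' + k < M + m
          · rw [if_neg hc1, if_pos hc2]
            have h1 : ¬ t + k ≤ (N:ℤ) + 1 := by push_cast at hpos ⊢; omega
            have h2 : t + k ≤ (N:ℤ) + 1 + m := by push_cast at hpos ⊢; omega
            simp only [hU, if_neg h1, if_pos h2]
            congr 1
            push_cast at hpos ⊢
            omega
          · rw [if_neg hc1, if_neg hc2]
            have h1 : (n:ℤ) - N - 1 ≤ t + k := by
              simp only [hn]; push_cast at hpos ⊢; omega
            rw [hUy _ h1]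
            congr 1
            simp only [hn]
            push_cast at hpos ⊢
            omega
  -- realize windows as points of the subshift
  have hwin : ∀ k : ℤ, ∃ z, z ∈ G.Sigma' ∧
      ∀ j : ℤ, -(N:ℤ) ≤ j → j ≤ (N:ℤ) + 1 → z j = U (k + j) := by
    intro k
    obtain ⟨v, e, hp⟩ := hwinpres (k - N)
    obtain ⟨z, hz, hzv⟩ := exists_point_of_presFun hG hp (-(N:ℤ))
    refine ⟨z, hz, ?_⟩
    intro j hj1 hj2
    have hl : (j + N).toNat < M := by omega
    have := hzv (j + N).toNat hl
    rw [show -(N:ℤ) + ((j + N).toNat : ℤ) = j by omega] at this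
    rw [this]
    congr 1
    omega
  choose zm hzm1 hzm2 using hwin
  -- the chain
  set zc : ℕ → ℤ → A := fun k => if k = 0 then x else if k < n then zm k else y with hzc
  have hn3 : 3 ≤ n := by omega
  refine ⟨n, by omega, zc, ?_, ?_, ?_, ?_⟩
  · simp [hzc]
  · simp only [hzc, if_neg (by omega : ¬ n = 0), if_neg (lt_irrefl n)]
  · intro i hi
    simp only [hzc]
    split_ifs
    · exact ⟨vx, ex, hbx⟩
    · exact hzm1 _
    · exact ⟨vy, ey, hby⟩
  · intro i hi
    have hagree : ∀ j : ℤ, j.natAbs ≤ N → shift (zc i) j = zc (i + 1) j := by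
      intro j hj
      have hj1 : -(N:ℤ) ≤ j := by omega
      have hj2 : j ≤ (N:ℤ) := by omega
      have hLHS : zc i (j + 1) = U ((i:ℤ) + j + 1) := by
        by_cases hi0 : i = 0
        · subst hi0
          simp only [hzc, if_pos rfl]
          rw [show ((0:ℕ):ℤ) + j + 1 = j + 1 by push_cast; ring, hUx (j+1) (by omega)]
        · simp only [hzc, if_neg hi0, if_pos hi]
          rw [hzm2 (i:ℤ) (j+1) (by omega) (by omega)]
          congr 1
          ring
      have hRHS : zc (i + 1) j = U ((i:ℤ) + j + 1) := by
        by_cases hin : i + 1 < n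
        · simp only [hzc, if_neg (by omega : ¬ i + 1 = 0), if_pos hin]
          push_cast
          rw [hzm2 ((i:ℤ)+1) j hj1 (by omega)]
          congr 1
          ring
        · have hieq : i + 1 = n := by omega
          simp only [hzc, if_neg (by omega : ¬ i + 1 = 0), if_neg hin]
          rw [hUy ((i:ℤ) + j + 1) (by rw [show (i:ℤ) = (n:ℤ) - 1 by omega]; omega)]
          congr 1
          rw [show (i:ℤ) = (n:ℤ) - 1 by omega]
          ring
      show zc i (j + 1) = zc (i+1) j
      rw [hLHS, hRHS]
    calc rho (shift (zc i)) (zc (i + 1)) ≤ (2:ℝ) ^ (-(N:ℤ) - 1) := rho_le_of_agree hagree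
    _ < ε := hN

end Backward

section Forward

variable {A : Type}

open LGraph

lemma SC_of_chainTransitive [Finite A] (G : LGraph A) (hG : G.Essential)
    (hct : ChainTransitive G.Sigma') : G.StronglyConnectedQuot := by
  intro u₀ v₀
  classical
  have hV : Nonempty G.V := ⟨u₀⟩
  have hE : Nonempty G.E := ⟨fch hG u₀⟩
  -- forward iteration from u₀
  set w : ℕ → G.V := fun k => Nat.rec u₀ (fun _ p => G.t (fch hG p)) k with hw
  have hwsucc : ∀ k, w (k + 1) = G.t (fch hG (w k)) := fun k => rfl
  have hwp : ∀ nn, G.PresFun nn (fun i => G.lab (fch hG (w i))) w (fun i => fch hG (w i)) :=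
    fun nn i hi => ⟨fch_s hG (w i), rfl, rfl⟩
  obtain ⟨k₁, k₂, _, hk12, hk2, hwk⟩ := pigeon (β := G.V) w 0
  set du := k₂ - k₁ with hdu
  have hdu1 : 0 < du := by omega
  have pcu : G.PresFun du (fun i => G.lab (fch hG (w (k₁ + i)))) (fun i => w (k₁ + i))
      (fun i => fch hG (w (k₁ + i))) := (hwp k₂).shift k₁ du (by omega)
  have hvu : (fun i => w (k₁ + i)) du = (fun i => w (k₁ + i)) 0 := by
    show w (k₁ + du) = w (k₁ + 0)
    rw [show k₁ + du = k₂ by omega, show k₁ + 0 = k₁ by omega]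
    exact hwk.symm
  obtain ⟨X, vxz, exz, hbx, hxspec⟩ := exists_periodic_point hdu1 pcu hvu
  -- backward iteration from v₀
  set r : ℕ → G.V := fun k => Nat.rec v₀ (fun _ p => G.s (bch hG p)) k with hr
  have hrsucc : ∀ k, r (k + 1) = G.s (bch hG (r k)) := fun k => rfl
  have hrreach : ∀ k, G.Reach (r k) v₀ := by
    intro k
    induction k with
    | zero => exact Relation.ReflTransGen.refl
    | succ k ih =>
      exact Relation.ReflTransGen.head ⟨bch hG (r k), (hrsucc k).symm, bch_t hG (r k)⟩ ih
  obtain ⟨k₁', k₂', _, hk12', hk2', hrk⟩ := pigeon (β := G.V) r 0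
  set dv := k₂' - k₁' with hdv
  have hdv1 : 0 < dv := by omega
  set vq : ℕ → G.V := fun j => r (k₂' - j) with hvq
  set eq : ℕ → G.E := fun j => bch hG (r (k₂' - 1 - j)) with heq
  have pcv : G.PresFun dv (fun j => G.lab (eq j)) vq eq := by
    intro j hj
    refine ⟨?_, ?_, rfl⟩
    · show G.s (bch hG (r (k₂' - 1 - j))) = r (k₂' - j)
      rw [← hrsucc (k₂' - 1 - j), show k₂' - 1 - j + 1 = k₂' - j from by omega]
    · show G.t (bch hG (r (k₂' - 1 - j))) = r (k₂' - (j + 1))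
      rw [bch_t, show k₂' - 1 - j = k₂' - (j + 1) from by omega]
  have hvv : vq dv = vq 0 := by
    show r (k₂' - dv) = r (k₂' - 0)
    rw [show k₂' - dv = k₁' by omega, show k₂' - 0 = k₂' by omega]
    exact hrk
  obtain ⟨Y, vyz, eyz, hby, hyspec⟩ := exists_periodic_point hdv1 pcv hvv
  -- the forward-closed saturated set
  set S : Set G.V := {p | G.GenReach (w k₁) p} with hS
  have hSfwd : ∀ f : G.E, G.s f ∈ S → G.t f ∈ S := by
    intro f hf
    exact Relation.ReflTransGen.tail hf (Or.inl ⟨f, rfl, rfl⟩)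
  have hSlink : ∀ p q : G.V, p ∈ S → G.Linked p q → q ∈ S := by
    intro p q hp hl
    exact Relation.ReflTransGen.tail hp (Or.inr hl)
  have hSreach : ∀ p q : G.V, p ∈ S → G.Reach p q → q ∈ S := by
    intro p q hp hr
    exact Relation.ReflTransGen.trans hp
      (Relation.ReflTransGen.mono (fun _ _ h => Or.inl h) _ _ hr)
  have hcycS : ∀ l : ℕ, l ≤ du → w (k₁ + l) ∈ S := by
    intro l hl
    have := (hwp (k₁ + l)).reach' (i := k₁) (j := k₁ + l) (by omega) le_rfl
    exact Relation.ReflTransGen.mono (fun _ _ h => Or.inl h) _ _ this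
  have hxS : ∀ t : ℤ, vxz t ∈ S := by
    intro t
    obtain ⟨l, hl, hvl⟩ := hxspec t
    rw [hvl]
    exact hcycS l (by omega)
  -- constants
  set κ := Nat.card (G.V × G.V) with hκ
  have hκ1 : 1 ≤ κ := Nat.card_pos
  set M := 2 * κ + 2 with hMdef
  -- apply chain transitivity
  have hXmem : X ∈ G.Sigma' := ⟨vxz, exz, hbx⟩
  have hYmem : Y ∈ G.Sigma' := ⟨vyz, eyz, hby⟩
  obtain ⟨n, hn0, hch⟩ := hct X hXmem Y hYmem ((2:ℝ) ^ (-(M:ℤ))) (by positivity)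
  obtain ⟨z, hz0, hzn, hzmem, hstepchain⟩ := hch
  have hagree : ∀ i, i < n → ∀ j : ℤ, j.natAbs ≤ M → z i (j + 1) = z (i + 1) j := by
    intro i hi j hj
    exact agree_of_rho_lt (hstepchain i hi) j hj
  -- presentations of the chain points
  have hzm' : ∀ i : ℕ, ∃ v : ℤ → G.V, ∃ e : ℤ → G.E, i ≤ n → G.BiPresIn Set.univ (z i) v e := by
    intro i
    by_cases hi : i ≤ n
    · obtain ⟨v, e, hp⟩ := hzmem i hi
      exact ⟨v, e, fun _ => hp⟩
    · exact ⟨fun _ => u₀, fun _ => fch hG u₀, fun h => absurd h hi⟩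
  choose pv pe hp using hzm'
  -- the chain word
  set cl : ℤ → ℕ := fun t => if t < 0 then 0 else min t.toNat n with hcl
  set W : ℤ → A := fun t => z (cl t) (t - cl t) with hW
  have hcl0 : ∀ t : ℤ, t < 0 → cl t = 0 := fun t ht => if_pos ht
  have hclmid : ∀ t : ℤ, 0 ≤ t → t ≤ (n:ℤ) → cl t = t.toNat := by
    intro t h1 h2
    simp only [hcl, if_neg (by omega : ¬ t < 0)]
    omega
  have hcln : ∀ t : ℤ, (n:ℤ) ≤ t → cl t = n := by
    intro t h1
    simp only [hcl, if_neg (by omega : ¬ t < 0)]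
    omega
  have claimB : ∀ (d i : ℕ), i + d ≤ n → ∀ t : ℤ, t ≤ (i:ℤ) + M → ((i:ℤ) + d) - M ≤ t →
      z i (t - i) = z (i + d) (t - (i + d)) := by
    intro d
    induction d with
    | zero => intro i _ t _ _; rfl
    | succ d ih =>
      intro i hi t ht1 ht2
      rw [ih i (by omega) t ht1 (by push_cast at ht2 ⊢; omega)]
      have hstep := hagree (i + d) (by omega) (t - (i + d) - 1) (by
        have h1 : ((i:ℤ) + d) - M ≤ t := by push_cast at ht2 ⊢; omega
        omega)
      rw [show t - ((i:ℤ) + d) - 1 + 1 = t - (i + d) by ring] at hstep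
      rw [hstep]
      congr 1 <;> push_cast <;> ring
  have claimB' : ∀ (i k : ℕ), i ≤ k → k ≤ n → ∀ t : ℤ, t ≤ (i:ℤ) + M → (k:ℤ) - M ≤ t →
      z i (t - i) = z k (t - k) := by
    intro i k hik hkn t h1 h2
    have hB := claimB (k - i) i (by omega) t h1 (by
      have : ((i:ℤ) + ((k - i : ℕ):ℤ)) = (k:ℤ) := by omega
      omega)
    rw [show i + (k - i) = k by omega] at hB
    rw [show ((i:ℤ) + ((k - i : ℕ):ℤ)) = (k:ℤ) by omega] at hB
    exact hB
  have claimW1 : ∀ (i : ℕ), i ≤ n → ∀ t : ℤ, t ≤ (i:ℤ) + M → (i:ℤ) - M ≤ t →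
      W t = z i (t - i) := by
    intro i hi t ht1 ht2
    by_cases h1 : t < 0
    · have : W t = z 0 (t - (0:ℕ)) := by simp only [hW, hcl0 t h1]
      rw [this]
      have h3 := claimB' 0 i (by omega) hi t (by push_cast; omega) ht2
      rw [show t - ((0:ℕ):ℤ) = t - (0:ℤ) by norm_num] at h3 ⊢
      exact h3
    · by_cases h2 : t ≤ (n:ℤ)
      · have hclt : cl t = t.toNat := hclmid t (by omega) h2
        have hWt : W t = z t.toNat (t - t.toNat) := by simp only [hW, hclt]
        rw [hWt]
        rcases le_or_gt i t.toNat with hc | hc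
        · exact (claimB' i t.toNat hc (by omega) t ht1 (by omega)).symm
        · exact claimB' t.toNat i (by omega) hi t (by omega) ht2
      · have hclt : cl t = n := hcln t (by omega)
        have hWt : W t = z n (t - n) := by simp only [hW, hclt]
        rw [hWt]
        exact (claimB' i n hi le_rfl t ht1 (by omega)).symm
  have hWx : ∀ t : ℤ, t ≤ (M:ℤ) → W t = X t := by
    intro t ht
    by_cases h1 : t < 0
    · have : W t = z 0 (t - (0:ℕ)) := by simp only [hW, hcl0 t h1]
      rw [this, hz0]
      norm_num
    · have := claimW1 0 (by omega) t (by push_cast; omega) (by push_cast; omega)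
      rw [this, hz0]
      norm_num
  have hWy : ∀ t : ℤ, (n:ℤ) - M ≤ t → W t = Y (t - n) := by
    intro t ht
    by_cases h1 : (n:ℤ) ≤ t
    · have : W t = z n (t - n) := by simp only [hW, hcln t h1]
      rw [this, hzn]
    · have := claimW1 n le_rfl t (by omega) (by omega)
      rw [this, hzn]
  -- every window of W is presentable
  have hWEX : ∀ t : ℤ, ∃ v e, G.PresFun (M + 1) (fun k => W (t + k)) v e := by
    intro t
    by_cases h1 : t < 0
    · refine ⟨_, _, (hbx.presFun t (M + 1)).congr_word ?_⟩
      intro i hi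
      exact (hWx (t + i) (by omega)).symm
    · by_cases h2 : t ≤ (n:ℤ)
      · have hi : t.toNat ≤ n := by omega
        refine ⟨_, _, ((hp t.toNat hi).presFun (t - t.toNat) (M + 1)).congr_word ?_⟩
        intro i hℓ
        have := claimW1 t.toNat hi (t + i) (by omega) (by omega)
        rw [this]
        congr 1
        omega
      · refine ⟨_, _, (hby.presFun (t - n) (M + 1)).congr_word ?_⟩
        intro i hi
        have := hWy (t + i) (by omega)
        rw [this]
        congr 1
        ring
  -- the invariant
  set Inv : ℤ → Prop := fun t => ∀ (v : ℕ → G.V) (e : ℕ → G.E),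
    G.PresFun (M + 1) (fun k => W (t + k)) v e → ∃ j, j ≤ κ ∧ v j ∈ S with hInvdef
  have hbase : ∀ t : ℤ, t ≤ 0 → Inv t := by
    intro t ht v e hpres
    have hxp : G.PresFun (M + 1) (fun k => W (t + k)) (fun k => vxz (t + k))
        (fun k => exz (t + k)) :=
      (hbx.presFun t (M + 1)).congr_word (fun i hi => (hWx (t + i) (by omega)).symm)
    obtain ⟨i, j, _, hij, hjκ, hgeq⟩ := pigeon (fun j => (vxz (t + j), v j)) 0
    have h1 : vxz (t + i) = vxz (t + j) := congrArg Prod.fst hgeq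
    have h2 : v i = v j := congrArg Prod.snd hgeq
    have hlk := linked_of_parallel hxp hpres hij (by omega) (by
      show vxz (t + i) = vxz (t + j); exact h1) h2
    exact ⟨i, by omega, hSlink _ _ (hxS (t + i)) hlk⟩
  have hInd : ∀ (T : ℕ), ∀ t : ℤ, t ≤ (T:ℤ) → Inv t := by
    intro T
    induction T with
    | zero => intro t ht; exact hbase t (by exact_mod_cast ht)
    | succ T ih =>
      intro t ht
      by_cases hle : t ≤ (T:ℤ)
      · exact ih t hle
      · intro v e hpres
        set t0 := t - (M:ℤ) + κ with ht0
        obtain ⟨vD, eD, hD⟩ := hWEX t0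
        obtain ⟨jD, hjD, hmemD⟩ := ih t0 (by push_cast at ht ⊢; omega) vD eD hD
        have hDS : ∀ j, κ ≤ j → j ≤ M + 1 → vD j ∈ S := by
          intro j hj1 hj2
          exact hD.mem_S hSfwd (le_trans hjD hj1) hj2 hmemD
        have hD' := hD.shift (M - κ) (κ + 1) (by omega)
        have hDwin : G.PresFun (κ + 1) (fun k => W (t + k)) (fun i => vD (M - κ + i))
            (fun i => eD (M - κ + i)) := by
          refine hD'.congr_word ?_
          intro i hi
          congr 1
          push_cast at ht0 ⊢
          omega
        have hB' : G.PresFun (κ + 1) (fun k => W (t + k)) v e := hpres.mono (by omega)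
        obtain ⟨i, j, _, hij, hjκ, hgeq⟩ := pigeon (fun j => (vD (M - κ + j), v j)) 0
        have h1 : vD (M - κ + i) = vD (M - κ + j) := congrArg Prod.fst hgeq
        have h2 : v i = v j := congrArg Prod.snd hgeq
        have hlk := linked_of_parallel hDwin hB' hij (by omega) (by
          show vD (M - κ + i) = vD (M - κ + j); exact h1) h2
        refine ⟨i, by omega, hSlink _ _ (hDS (M - κ + i) (by omega) (by omega)) hlk⟩
  -- conclude at the right end
  have hByp : G.PresFun (M + 1) (fun k => W ((n:ℤ) + k)) (fun k => vyz ((0:ℤ) + k))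
      (fun k => eyz ((0:ℤ) + k)) := by
    refine (hby.presFun 0 (M + 1)).congr_word ?_
    intro i hi
    rw [hWy ((n:ℤ) + i) (by omega)]
    congr 1
    ring
  obtain ⟨j, hjκ, hjS⟩ := hInd n (n:ℤ) le_rfl _ _ hByp
  -- the found vertex lies on the v-cycle
  obtain ⟨l, hl, hvl⟩ := hyspec ((0:ℤ) + j)
  rw [hvl] at hjS
  have hreach1 : G.Reach (vq l) (vq dv) := pcv.reach' (by omega) le_rfl
  have hfin : r k₁' ∈ S := by
    apply hSreach _ _ hjS
    rw [show r k₁' = vq dv by rw [hvq]; show r k₁' = r (k₂' - dv); congr 1; omega]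
    exact hreach1
  -- assemble
  have hstart : G.GenReach u₀ (w k₁) :=
    Relation.ReflTransGen.mono (fun _ _ h => Or.inl h) _ _
      ((hwp k₁).reach' (Nat.zero_le k₁) le_rfl)
  have hend : G.GenReach (r k₁') v₀ :=
    Relation.ReflTransGen.mono (fun _ _ h => Or.inl h) _ _ (hrreach k₁')
  exact Relation.ReflTransGen.trans hstart (Relation.ReflTransGen.trans hfin hend)

end Forward
theorem stmt11 {A : Type} [Finite A] (G : LGraph A) (hG : G.Essential) :
    ChainTransitive G.Sigma' ↔ G.StronglyConnectedQuot :=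
  ⟨fun h => SC_of_chainTransitive G hG h, fun h => chainTransitive_of_SC G hG h⟩
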